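/- Let X be a real random variable, f : ℝ → [0,∞) a Borel measurable function, and α ∈ (0,1). Then ∫_0^α f(q_u(X)) du = E[f(X)·1{X ≤ q_α(X)}] + f(q_α(X))·(α − P[X ≤ q_α(X)]), where the left-hand side is the Lebesgue integral over u ∈ (0,α); if either side is infinite, so is the other. -/

import Mathlib

open MeasureTheory Set Filter Topology
open scoped ENNReal NNReal

/-- The `α`-quantile of a real random variable `X`:
`q_α(X) = inf {x ∈ ℝ : P[X ≤ x] ≥ α}`. -/
noncomputable def quantile {Ω : Type*} [MeasurableSpace Ω] (μ : Measure Ω)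
    (X : Ω → ℝ) (α : ℝ) : ℝ :=
  sInf {x : ℝ | ENNReal.ofReal α ≤ μ {ω | X ω ≤ x}}

section Aux

set_option linter.unusedSectionVars false

variable {Ω : Type*} [MeasurableSpace Ω] {μ : Measure Ω} [IsProbabilityMeasure μ]
  {X : Ω → ℝ}

private lemma F_mono : Monotone fun x : ℝ => μ {ω | X ω ≤ x} :=
  fun _ _ hab => measure_mono fun _ h => le_trans h hab

private lemma S_nonempty {u : ℝ} (hu : u < 1) :
    {x : ℝ | ENNReal.ofReal u ≤ μ {ω | X ω ≤ x}}.Nonempty := by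
  have hmono : Monotone fun n : ℕ => {ω | X ω ≤ (n : ℝ)} := by
    intro a b hab ω h
    show X ω ≤ (b : ℝ)
    exact le_trans h (Nat.cast_le.2 hab)
  have hU : ⋃ n : ℕ, {ω | X ω ≤ (n : ℝ)} = univ := by
    ext ω
    simp only [mem_iUnion, mem_setOf_eq, mem_univ, iff_true]
    exact exists_nat_ge (X ω)
  have h1 : Tendsto (fun n : ℕ => μ {ω | X ω ≤ (n : ℝ)}) atTop (𝓝 1) := by
    have := tendsto_measure_iUnion_atTop (μ := μ) hmono
    rwa [hU, measure_univ] at this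
  have hlt : ENNReal.ofReal u < 1 := by
    rw [← ENNReal.ofReal_one]
    exact (ENNReal.ofReal_lt_ofReal_iff one_pos).2 hu
  obtain ⟨n, hn⟩ := (h1.eventually (eventually_gt_nhds hlt)).exists
  exact ⟨n, hn.le⟩

private lemma S_bddBelow (hX : Measurable X) {u : ℝ} (hu : 0 < u) :
    BddBelow {x : ℝ | ENNReal.ofReal u ≤ μ {ω | X ω ≤ x}} := by
  have hanti : Antitone fun n : ℕ => {ω | X ω ≤ -(n : ℝ)} := by
    intro a b hab ω h
    have hb : X ω ≤ -(b : ℝ) := h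
    show X ω ≤ -(a : ℝ)
    have : -(b : ℝ) ≤ -(a : ℝ) := neg_le_neg (Nat.cast_le.2 hab)
    linarith
  have hI : ⋂ n : ℕ, {ω | X ω ≤ -(n : ℝ)} = ∅ := by
    ext ω
    simp only [mem_iInter, mem_setOf_eq, mem_empty_iff_false, iff_false, not_forall, not_le]
    obtain ⟨n, hn⟩ := exists_nat_gt (-X ω)
    exact ⟨n, by linarith⟩
  have h0 : Tendsto (fun n : ℕ => μ {ω | X ω ≤ -(n : ℝ)}) atTop (𝓝 0) := by
    have := tendsto_measure_iInter_atTop (μ := μ)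
      (s := fun n : ℕ => {ω | X ω ≤ -(n : ℝ)})
      (fun n => (hX measurableSet_Iic).nullMeasurableSet) hanti ⟨0, measure_ne_top μ _⟩
    rwa [hI, measure_empty] at this
  obtain ⟨n, hn⟩ := (h0.eventually (eventually_lt_nhds (ENNReal.ofReal_pos.2 hu))).exists
  refine ⟨-(n : ℝ), fun x hx => ?_⟩
  by_contra h
  push_neg at h
  exact absurd (le_trans hx (F_mono h.le)) (not_le.2 hn)

private lemma quantile_mem (hX : Measurable X) {u : ℝ} (hu0 : 0 < u) (hu1 : u < 1) :
    ENNReal.ofReal u ≤ μ {ω | X ω ≤ quantile μ X u} := by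
  set S := {x : ℝ | ENNReal.ofReal u ≤ μ {ω | X ω ≤ x}} with hS
  set c := sInf S with hc
  have hkey : ∀ n : ℕ, ENNReal.ofReal u ≤ μ {ω | X ω ≤ c + 1 / ((n : ℝ) + 1)} := by
    intro n
    have hpos : (0 : ℝ) < 1 / ((n : ℝ) + 1) := by positivity
    have hlt : c < c + 1 / ((n : ℝ) + 1) := by linarith
    obtain ⟨y, hyS, hy⟩ := (csInf_lt_iff (S_bddBelow hX hu0) (S_nonempty hu1)).1 hlt
    exact le_trans hyS (F_mono hy.le)
  have hanti : Antitone fun n : ℕ => {ω | X ω ≤ c + 1 / ((n : ℝ) + 1)} := by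
    intro a b hab ω h
    have hb : X ω ≤ c + 1 / ((b : ℝ) + 1) := h
    show X ω ≤ c + 1 / ((a : ℝ) + 1)
    have hcast : (a : ℝ) ≤ b := Nat.cast_le.2 hab
    have h2 : 1 / ((b : ℝ) + 1) ≤ 1 / ((a : ℝ) + 1) := by
      apply one_div_le_one_div_of_le <;> [positivity; linarith]
    linarith
  have hInter : ⋂ n : ℕ, {ω | X ω ≤ c + 1 / ((n : ℝ) + 1)} = {ω | X ω ≤ c} := by
    ext ω
    simp only [mem_iInter, mem_setOf_eq]
    constructor
    · intro h
      by_contra hlt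
      push_neg at hlt
      obtain ⟨n, hn⟩ := exists_nat_one_div_lt (show (0 : ℝ) < X ω - c by linarith)
      have := h n
      linarith
    · intro h n
      have hpos : (0 : ℝ) < 1 / ((n : ℝ) + 1) := by positivity
      linarith
  have htend : Tendsto (fun n : ℕ => μ {ω | X ω ≤ c + 1 / ((n : ℝ) + 1)}) atTop
      (𝓝 (μ {ω | X ω ≤ c})) := by
    have := tendsto_measure_iInter_atTop (μ := μ)
      (s := fun n : ℕ => {ω | X ω ≤ c + 1 / ((n : ℝ) + 1)})
      (fun n => (hX measurableSet_Iic).nullMeasurableSet) hanti ⟨0, measure_ne_top μ _⟩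
    rwa [hInter] at this
  exact ge_of_tendsto htend (Eventually.of_forall hkey)

private lemma quantile_le_iff (hX : Measurable X) {u : ℝ} (hu0 : 0 < u) (hu1 : u < 1) (x : ℝ) :
    quantile μ X u ≤ x ↔ ENNReal.ofReal u ≤ μ {ω | X ω ≤ x} := by
  constructor
  · intro h
    exact le_trans (quantile_mem hX hu0 hu1) (F_mono h)
  · intro h
    exact csInf_le (S_bddBelow hX hu0) h

private lemma quantile_monoOn (hX : Measurable X) :
    MonotoneOn (fun u => quantile μ X u) (Ioo (0 : ℝ) 1) := by
  intro u hu v hv huv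
  show quantile μ X u ≤ quantile μ X v
  rw [quantile_le_iff hX hu.1 hu.2]
  exact le_trans (ENNReal.ofReal_le_ofReal huv) (quantile_mem hX hv.1 hv.2)

private lemma map_quantile (hX : Measurable X) :
    Measure.map (fun u => quantile μ X u) (volume.restrict (Ioo (0 : ℝ) 1))
      = Measure.map X μ := by
  have hq_ae : AEMeasurable (fun u => quantile μ X u) (volume.restrict (Ioo (0 : ℝ) 1)) :=
    aemeasurable_restrict_of_monotoneOn measurableSet_Ioo (quantile_monoOn hX)
  have hfin : IsFiniteMeasure
      (Measure.map (fun u => quantile μ X u) (volume.restrict (Ioo (0 : ℝ) 1))) := by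
    constructor
    rw [Measure.map_apply_of_aemeasurable hq_ae MeasurableSet.univ, preimage_univ,
      Measure.restrict_apply_univ, Real.volume_Ioo]
    exact ENNReal.ofReal_lt_top
  refine Measure.ext_of_Iic _ _ fun x => ?_
  rw [Measure.map_apply_of_aemeasurable hq_ae measurableSet_Iic,
    Measure.map_apply hX measurableSet_Iic]
  rw [Measure.restrict_apply' measurableSet_Ioo]
  have hXx : (X ⁻¹' Iic x) = {ω | X ω ≤ x} := rfl
  set t := (μ {ω | X ω ≤ x}).toReal with ht
  have hFt : μ {ω | X ω ≤ x} = ENNReal.ofReal t :=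
    (ENNReal.ofReal_toReal (measure_ne_top μ _)).symm
  have ht1 : t ≤ 1 := by
    have h := ENNReal.toReal_mono (ENNReal.one_ne_top)
      (prob_le_one (μ := μ) (s := {ω | X ω ≤ x}))
    simpa [ht] using h
  have hset : (fun u => quantile μ X u) ⁻¹' Iic x ∩ Ioo 0 1
      = Ioc (0 : ℝ) t ∩ Ioo 0 1 := by
    ext u
    simp only [mem_inter_iff, mem_preimage, mem_Iic, mem_Ioo, mem_Ioc]
    constructor
    · rintro ⟨h, hu0, hu1⟩
      have h2 := (quantile_le_iff hX hu0 hu1 x).1 h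
      rw [hFt] at h2
      exact ⟨⟨hu0, (ENNReal.ofReal_le_ofReal_iff ENNReal.toReal_nonneg).1 h2⟩, hu0, hu1⟩
    · rintro ⟨⟨hu0, hut⟩, _, hu1⟩
      refine ⟨(quantile_le_iff hX hu0 hu1 x).2 ?_, hu0, hu1⟩
      rw [hFt]
      exact ENNReal.ofReal_le_ofReal hut
  rw [hset, hXx]
  rcases lt_or_eq_of_le ht1 with h | h
  · have heq : Ioc (0 : ℝ) t ∩ Ioo 0 1 = Ioc 0 t :=
      inter_eq_left.2 fun u hu => ⟨hu.1, lt_of_le_of_lt hu.2 h⟩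
    rw [heq, Real.volume_Ioc, sub_zero, hFt]
  · have heq : Ioc (0 : ℝ) t ∩ Ioo 0 1 = Ioo 0 1 :=
      inter_eq_right.2 fun u hu => ⟨hu.1, le_of_le_of_eq hu.2.le h.symm⟩
    rw [heq, Real.volume_Ioo, sub_zero, hFt, h, ENNReal.ofReal_one]

end Aux

/-- `∫_0^α f(q_u(X)) du = E[f(X)·1{X ≤ q_α(X)}] + f(q_α(X))·(α - P[X ≤ q_α(X)])` for
non-negative Borel `f`, stated in `ℝ≥0∞` (with the non-positive correction term moved to
the left-hand side) so that if either side is infinite, so is the other. -/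
theorem integral_quantile_eq_tail_expectation {Ω : Type*} [MeasurableSpace Ω]
    (μ : Measure Ω) [IsProbabilityMeasure μ] (X : Ω → ℝ) (hX : Measurable X)
    (f : ℝ → ℝ) (hf : Measurable f) (hf0 : ∀ x, 0 ≤ f x)
    (α : ℝ) (hα : α ∈ Set.Ioo (0 : ℝ) 1) :
    (∫⁻ u in Set.Ioo (0 : ℝ) α, ENNReal.ofReal (f (quantile μ X u)))
        + ENNReal.ofReal (f (quantile μ X α))
          * (μ {ω | X ω ≤ quantile μ X α} - ENNReal.ofReal α)
      = ∫⁻ ω in {ω | X ω ≤ quantile μ X α}, ENNReal.ofReal (f (X ω)) ∂μ := by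
  obtain ⟨hα0, hα1⟩ := hα
  set qα := quantile μ X α with hqα
  set F := μ {ω | X ω ≤ qα} with hFdef
  have hFα : ENNReal.ofReal α ≤ F := quantile_mem hX hα0 hα1
  set t := F.toReal with htdef
  have hFt : F = ENNReal.ofReal t := (ENNReal.ofReal_toReal (measure_ne_top μ _)).symm
  have hαt : α ≤ t := by
    rw [hFt] at hFα
    exact (ENNReal.ofReal_le_ofReal_iff ENNReal.toReal_nonneg).1 hFα
  have ht1 : t ≤ 1 := by
    have h := ENNReal.toReal_mono (ENNReal.one_ne_top)
      (prob_le_one (μ := μ) (s := {ω | X ω ≤ qα}))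
    simpa [htdef, hFdef] using h
  set g : ℝ → ℝ≥0∞ := (Iic qα).indicator (fun x => ENNReal.ofReal (f x)) with hg
  have hgmeas : Measurable g :=
    (ENNReal.measurable_ofReal.comp hf).indicator measurableSet_Iic
  have hq_ae : AEMeasurable (fun u => quantile μ X u) (volume.restrict (Ioo (0 : ℝ) 1)) :=
    aemeasurable_restrict_of_monotoneOn measurableSet_Ioo (quantile_monoOn hX)
  have hRHS : ∫⁻ ω in {ω | X ω ≤ qα}, ENNReal.ofReal (f (X ω)) ∂μ
      = ∫⁻ u in Ioo (0 : ℝ) 1, g (quantile μ X u) := by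
    have h1 : ∫⁻ ω in {ω | X ω ≤ qα}, ENNReal.ofReal (f (X ω)) ∂μ
        = ∫⁻ ω, g (X ω) ∂μ := by
      have hms : MeasurableSet {ω | X ω ≤ qα} := hX measurableSet_Iic
      rw [← lintegral_indicator hms]
      refine lintegral_congr fun ω => ?_
      by_cases h : X ω ≤ qα <;> simp [hg, indicator, h]
    rw [h1, ← lintegral_map hgmeas hX, ← map_quantile hX,
      lintegral_map' hgmeas.aemeasurable hq_ae]
  rw [hRHS]
  have hptwise : ∀ u ∈ Ioo (0 : ℝ) 1,
      g (quantile μ X u)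
        = (Iic t).indicator (fun u => ENNReal.ofReal (f (quantile μ X u))) u := by
    intro u hu
    by_cases h : u ≤ t
    · have hq : quantile μ X u ≤ qα := by
        rw [quantile_le_iff hX hu.1 hu.2, ← hFdef, hFt]
        exact ENNReal.ofReal_le_ofReal h
      simp [hg, indicator, hq, h]
    · push_neg at h
      have hq : ¬ quantile μ X u ≤ qα := by
        rw [quantile_le_iff hX hu.1 hu.2, ← hFdef, hFt]
        exact not_le.2 ((ENNReal.ofReal_lt_ofReal_iff hu.1).2 h)
      simp [hg, indicator, hq, not_le.2 h]
  have hstep1 : ∫⁻ u in Ioo (0 : ℝ) 1, g (quantile μ X u)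
      = ∫⁻ u in Iic t ∩ Ioo (0 : ℝ) 1, ENNReal.ofReal (f (quantile μ X u)) := by
    rw [setLIntegral_congr_fun_ae measurableSet_Ioo (ae_of_all _ hptwise),
      lintegral_indicator measurableSet_Iic _, Measure.restrict_restrict measurableSet_Iic]
  have hstep2 : (Iic t ∩ Ioo (0 : ℝ) 1 : Set ℝ) =ᵐ[volume] Ioc (0 : ℝ) t := by
    rw [MeasureTheory.ae_eq_set]
    constructor
    · have h1 : (Iic t ∩ Ioo (0 : ℝ) 1) \ Ioc 0 t = ∅ := by
        ext u
        simp only [mem_diff, mem_inter_iff, mem_Iic, mem_Ioo, mem_Ioc, mem_empty_iff_false,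
          iff_false, not_and, not_not]
        tauto
      rw [h1]; simp
    · have h2 : Ioc (0 : ℝ) t \ (Iic t ∩ Ioo 0 1) ⊆ {1} := by
        rintro u ⟨⟨hu0, hut⟩, h⟩
        have hne : ¬(0 < u ∧ u < 1) := fun hc => h ⟨hut, hc⟩
        have hu1 : 1 ≤ u := not_lt.1 fun hlt => hne ⟨hu0, hlt⟩
        exact mem_singleton_iff.2 (le_antisymm (hut.trans ht1) hu1)
      exact measure_mono_null h2 (by simp)
  have hstep3 : ∫⁻ u in Iic t ∩ Ioo (0 : ℝ) 1, ENNReal.ofReal (f (quantile μ X u))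
      = ∫⁻ u in Ioc (0 : ℝ) t, ENNReal.ofReal (f (quantile μ X u)) := by
    rw [Measure.restrict_congr_set hstep2]
  have hsplit : ∫⁻ u in Ioc (0 : ℝ) t, ENNReal.ofReal (f (quantile μ X u))
      = (∫⁻ u in Ioc (0 : ℝ) α, ENNReal.ofReal (f (quantile μ X u)))
        + ∫⁻ u in Ioc α t, ENNReal.ofReal (f (quantile μ X u)) := by
    rw [← lintegral_union measurableSet_Ioc (Ioc_disjoint_Ioc_of_le le_rfl),
      Ioc_union_Ioc_eq_Ioc hα0.le hαt]
  have hfirst : ∫⁻ u in Ioc (0 : ℝ) α, ENNReal.ofReal (f (quantile μ X u))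
      = ∫⁻ u in Ioo (0 : ℝ) α, ENNReal.ofReal (f (quantile μ X u)) := by
    rw [Measure.restrict_congr_set Ioo_ae_eq_Ioc.symm]
  have hconst : ∀ u ∈ Ioo α t, ENNReal.ofReal (f (quantile μ X u)) = ENNReal.ofReal (f qα) := by
    intro u hu
    have hu01 : u ∈ Ioo (0 : ℝ) 1 := ⟨lt_trans hα0 hu.1, lt_of_lt_of_le hu.2 ht1⟩
    have h1 : quantile μ X u ≤ qα := by
      rw [quantile_le_iff hX hu01.1 hu01.2, ← hFdef, hFt]
      exact ENNReal.ofReal_le_ofReal hu.2.le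
    have h2 : qα ≤ quantile μ X u := quantile_monoOn hX ⟨hα0, hα1⟩ hu01 hu.1.le
    rw [le_antisymm h1 h2]
  have hsecond : ∫⁻ u in Ioc α t, ENNReal.ofReal (f (quantile μ X u))
      = ENNReal.ofReal (f qα) * (F - ENNReal.ofReal α) := by
    rw [Measure.restrict_congr_set Ioo_ae_eq_Ioc.symm,
      setLIntegral_congr_fun_ae measurableSet_Ioo (ae_of_all _ hconst),
      setLIntegral_const, Real.volume_Ioo, hFt, ← ENNReal.ofReal_sub _ hα0.le]
  rw [hstep1, hstep3, hsplit, hfirst, hsecond]
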